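/- arXiv:0912.2548 — 2 statements merged into one kernel-verified Lean document; each statement's English description precedes it below -/
import Mathlib

section
/- Correctness of Pgen's subset pruning: let D be a finite set of transactions and define P = {T ∈ D : T is not a proper subset of any other transaction in D and sup(T, D) < k}. Then P equals the set of maximal infrequent itemsets of D, i.e., itemsets I with 0 < sup(I, D) < k such that every proper superset of I has support 0. -/
def supF {α : Type*} [DecidableEq α] (I : Finset α) (D : Finset (Finset α)) : ℕ :=
  (D.filter (fun T => I ⊆ T)).card

lemma supF_pos_iff {α : Type*} [DecidableEq α] (I : Finset α) (D : Finset (Finset α)) :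
    0 < supF I D ↔ ∃ T ∈ D, I ⊆ T := by
  simp [supF, Finset.card_pos, Finset.filter_nonempty_iff]

lemma mem_supF_pos {α : Type*} [DecidableEq α] {I : Finset α} {D : Finset (Finset α)}
    (h : I ∈ D) : 0 < supF I D := (supF_pos_iff I D).mpr ⟨I, h, le_refl I⟩

/-- Correctness of Pgen's pruning: the transactions of `D` that are not
    proper subsets of other transactions and have support `< k` are exactly
    the maximal infrequent itemsets of `D`. -/
theorem pgen_correct {α : Type*} [DecidableEq α]
    (D : Finset (Finset α)) (k : ℕ) (hk : 0 < k) (I : Finset α) :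
    (I ∈ D.filter (fun T => (∀ T' ∈ D, ¬ T ⊂ T') ∧ supF T D < k))
      ↔ (0 < supF I D ∧ supF I D < k ∧ ∀ J : Finset α, I ⊂ J → supF J D = 0) := by
  simp only [Finset.mem_filter]
  constructor
  · rintro ⟨hID, hmax, hsup⟩
    refine ⟨mem_supF_pos hID, hsup, fun J hIJ => ?_⟩
    by_contra h
    obtain ⟨T, hT, hJT⟩ := (supF_pos_iff J D).mp (Nat.pos_of_ne_zero h)
    exact hmax T hT (hIJ.trans_subset hJT)
  · rintro ⟨hpos, hsup, hmax⟩
    obtain ⟨T, hT, hIT⟩ := (supF_pos_iff I D).mp hpos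
    have hIeq : I = T := by
      by_contra hne
      have h1 := hmax T (hIT.ssubset_of_ne hne)
      have h2 := mem_supF_pos hT
      omega
    subst hIeq
    refine ⟨hT, fun T' hT' hss => ?_, hsup⟩
    have := hmax T' hss
    have := mem_supF_pos hT'
    omega
end

section
/- If a privacy constraint set P is satisfied in D̃ with parameter k (every p ∈ P satisfied per Definition of privacy constraint satisfiability) and every itemset I an attacker may use is a subset of some p ∈ P, then for every such I the itemset ⋃_{i∈I} Φ(i) is either supported by at least k transactions of D̃ or by none; hence no attacker using I can isolate fewer than k (but more than 0) transactions. -/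
def sup {α : Type*} [DecidableEq α] (I : Finset α) (D : Multiset (Finset α)) : ℕ :=
  (D.filter (fun T => I ⊆ T)).card

def satisfied {α : Type*} [DecidableEq α] (k : ℕ) (Φ : α → Finset α)
    (D : Multiset (Finset α)) (p : Finset α) : Prop :=
  k ≤ sup (p.biUnion Φ) D ∨
    (sup (p.biUnion Φ) D = 0 ∧
      ∀ J ⊂ p.biUnion Φ, k ≤ sup J D ∨ sup J D = 0)

/-- If all constraints of `P` are satisfied in `D̃` and an attacker's itemset
    `I` is a subset of some `p ∈ P`, then `⋃_{i∈I} Φ(i)` is supported by at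
    least `k` transactions of `D̃` or by none. -/
theorem protected_no_isolation {α : Type*} [DecidableEq α]
    (k : ℕ) (hk : 1 ≤ k) (Φ : α → Finset α) (D : Multiset (Finset α))
    (P : Finset (Finset α)) (hP : ∀ p ∈ P, satisfied k Φ D p)
    (I : Finset α) (hI : ∃ p ∈ P, I ⊆ p) :
    k ≤ sup (I.biUnion Φ) D ∨ sup (I.biUnion Φ) D = 0 := by
  obtain ⟨p, hpP, hIp⟩ := hI
  have hsub : I.biUnion Φ ⊆ p.biUnion Φ := Finset.biUnion_subset_biUnion_of_subset_left _ hIp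
  have hmono : sup (p.biUnion Φ) D ≤ sup (I.biUnion Φ) D := by
    apply Multiset.card_le_card
    exact Multiset.monotone_filter_right D (fun T h => hsub.trans h)
  rcases hP p hpP with h | ⟨h0, hprop⟩
  · exact Or.inl (h.trans hmono)
  · rcases eq_or_lt_of_le hsub with heq | hlt
    · rw [heq]; exact Or.inr h0
    · exact hprop _ hlt
end
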